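/- arXiv:1504.03453 — 2 statements merged into one kernel-verified Lean document; each statement's English description precedes it below -/
import Mathlib

section
/- For all integers j ≥ 1, twice the sum over j1 + j2 = j - 1 (j1, j2 ≥ 0) of a_{j1} * b_{j2} equals b_j - a_{j-1}, which also equals 2(j-1) * a_{j-1}. -/
def a (j : ℕ) : ℚ :=
  (Nat.factorial (2 * j) : ℚ) / ((Nat.factorial j : ℚ) * (Nat.factorial (j + 1) : ℚ))

def b (j : ℕ) : ℚ :=
  if j = 0 then 0
  else (Nat.factorial (2 * j - 1) : ℚ) / ((Nat.factorial j : ℚ) * (Nat.factorial (j - 1) : ℚ))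

lemma a_eq_catalan (k : ℕ) : a k = (catalan k : ℚ) := by
  have h := succ_mul_catalan_eq_centralBinom k
  have hc : (k + 1 : ℚ) * (catalan k : ℚ) = (Nat.centralBinom k : ℚ) := by
    exact_mod_cast congrArg (Nat.cast : ℕ → ℚ) h
  have hcb : Nat.centralBinom k * Nat.factorial k * Nat.factorial k
      = Nat.factorial (2 * k) := by
    have := Nat.choose_mul_factorial_mul_factorial (show k ≤ 2 * k by omega)
    simpa [Nat.centralBinom, two_mul, Nat.add_sub_cancel] using this
  have hcbq : (Nat.centralBinom k : ℚ) * (Nat.factorial k : ℚ) * (Nat.factorial k : ℚ)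
      = (Nat.factorial (2 * k) : ℚ) := by exact_mod_cast congrArg (Nat.cast : ℕ → ℚ) hcb
  have hfk : (Nat.factorial k : ℚ) ≠ 0 := by exact_mod_cast (Nat.factorial_pos k).ne'
  have hfk1 : (Nat.factorial (k + 1) : ℚ) ≠ 0 := by
    exact_mod_cast (Nat.factorial_pos (k + 1)).ne'
  have hks : (Nat.factorial (k + 1) : ℚ) = (k + 1) * Nat.factorial k := by
    push_cast [Nat.factorial_succ]; ring
  rw [a, ← hcbq, ← hc, hks]
  field_simp

lemma b_eq (m : ℕ) : b (m + 1) = (2 * (m : ℚ) + 1) * a m := by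
  have h1 : 2 * (m + 1) - 1 = 2 * m + 1 := by omega
  have h2 : (Nat.factorial (2 * m + 1) : ℚ) = (2 * m + 1) * Nat.factorial (2 * m) := by
    push_cast [Nat.factorial_succ]; ring
  have h3 : (Nat.factorial (m + 1) : ℚ) ≠ 0 := by
    exact_mod_cast (Nat.factorial_pos (m + 1)).ne'
  have h4 : (Nat.factorial m : ℚ) ≠ 0 := by exact_mod_cast (Nat.factorial_pos m).ne'
  rw [b, if_neg (Nat.succ_ne_zero m), a, h1, h2, Nat.add_sub_cancel]
  field_simp

lemma core (n : ℕ) :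
    ∑ k ∈ Finset.range n, (2 * ((n : ℚ) - k) - 1) * (catalan k : ℚ) * (catalan (n - 1 - k) : ℚ)
      = n * (catalan n : ℚ) := by
  cases n with
  | zero => simp
  | succ m =>
    have hT : ∑ k ∈ Finset.range (m + 1),
        ((m : ℚ) - 2 * k) * (catalan k : ℚ) * (catalan (m - k) : ℚ) = 0 := by
      set g : ℕ → ℚ := fun k => ((m : ℚ) - 2 * k) * (catalan k : ℚ) * (catalan (m - k) : ℚ)
        with hg
      have hrefl := Finset.sum_range_reflect g (m + 1)
      have hneg : ∀ k ∈ Finset.range (m + 1), g (m + 1 - 1 - k) = - g k := by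
        intro k hk
        have hk' : k ≤ m := by
          simpa using Nat.lt_succ_iff.mp (Finset.mem_range.mp hk)
        have h1 : m + 1 - 1 - k = m - k := by omega
        have h2 : m - (m - k) = k := Nat.sub_sub_self hk'
        have h3 : ((m - k : ℕ) : ℚ) = (m : ℚ) - k := by
          push_cast [Nat.cast_sub hk']; ring
        rw [h1, hg]
        simp only [h2, h3]
        ring
      have : ∑ k ∈ Finset.range (m + 1), g k
          = - ∑ k ∈ Finset.range (m + 1), g k := by
        conv_lhs => rw [← hrefl]
        rw [Finset.sum_congr rfl hneg, Finset.sum_neg_distrib]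
      linarith [this]
    have hcat : (catalan (m + 1) : ℚ)
        = ∑ k ∈ Finset.range (m + 1), (catalan k : ℚ) * (catalan (m - k) : ℚ) := by
      have := catalan_succ m
      rw [this]
      push_cast [Finset.sum_range]
      rfl
    have hsplit : ∀ k ∈ Finset.range (m + 1),
        (2 * (((m : ℕ) + 1 : ℚ) - k) - 1) * (catalan k : ℚ) * (catalan (m + 1 - 1 - k) : ℚ)
          = ((m : ℚ) + 1) * ((catalan k : ℚ) * (catalan (m - k) : ℚ))
            + ((m : ℚ) - 2 * k) * (catalan k : ℚ) * (catalan (m - k) : ℚ) := by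
      intro k hk
      have h1 : m + 1 - 1 - k = m - k := by omega
      rw [h1]; ring
    calc ∑ k ∈ Finset.range (m + 1),
          (2 * (((m + 1 : ℕ) : ℚ) - k) - 1) * (catalan k : ℚ) * (catalan (m + 1 - 1 - k) : ℚ)
        = ∑ k ∈ Finset.range (m + 1),
            (((m : ℚ) + 1) * ((catalan k : ℚ) * (catalan (m - k) : ℚ))
              + ((m : ℚ) - 2 * k) * (catalan k : ℚ) * (catalan (m - k) : ℚ)) := by
          refine Finset.sum_congr rfl fun k hk => ?_
          have := hsplit k hk
          push_cast at this ⊢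
          exact this
      _ = ((m : ℚ) + 1) * ∑ k ∈ Finset.range (m + 1),
            (catalan k : ℚ) * (catalan (m - k) : ℚ) + 0 := by
          rw [Finset.sum_add_distrib, Finset.mul_sum, hT]
      _ = ((m + 1 : ℕ) : ℚ) * (catalan (m + 1) : ℚ) := by
          rw [hcat]; push_cast; ring

theorem ab_convolution (j : ℕ) (hj : 1 ≤ j) :
    2 * (∑ p ∈ Finset.HasAntidiagonal.antidiagonal (j - 1), a p.1 * b p.2) = b j - a (j - 1) ∧
    b j - a (j - 1) = 2 * ((j : ℚ) - 1) * a (j - 1) := by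
  obtain ⟨n, rfl⟩ : ∃ n, j = n + 1 := ⟨j - 1, by omega⟩
  simp only [Nat.add_sub_cancel]
  have hb : b (n + 1) - a n = 2 * (n : ℚ) * a n := by
    rw [b_eq, a_eq_catalan]; ring
  constructor
  · rw [hb]
    rw [Finset.Nat.sum_antidiagonal_eq_sum_range_succ_mk]
    have hterm : ∀ k ∈ Finset.range (n + 1),
        a k * b (n - k)
          = (2 * ((n : ℚ) - k) - 1) * (catalan k : ℚ) * (catalan (n - 1 - k) : ℚ)
            + (if k = n then (1 : ℚ) * (catalan k : ℚ) * (catalan (n - 1 - k) : ℚ) else 0) := by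
      intro k hk
      have hk' : k ≤ n := Nat.lt_succ_iff.mp (Finset.mem_range.mp hk)
      by_cases h : k = n
      · subst h
        simp [b, a_eq_catalan, Nat.sub_self]
      · have hlt : k < n := lt_of_le_of_ne hk' h
        obtain ⟨m, hm⟩ : ∃ m, n - k = m + 1 := ⟨n - k - 1, by omega⟩
        have h1 : n - 1 - k = m := by omega
        have h2 : ((m : ℕ) : ℚ) = (n : ℚ) - k - 1 := by
          have hm' : m + 1 + k = n := by omega
          have := congrArg (Nat.cast : ℕ → ℚ) hm'
          push_cast at this; linarith
        rw [hm, b_eq, a_eq_catalan, a_eq_catalan, h1, if_neg h, h2]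
        ring
    rw [Finset.sum_congr rfl hterm, Finset.sum_add_distrib]
    rw [Finset.sum_ite_eq' (Finset.range (n + 1)) n
      (fun k => (1 : ℚ) * (catalan k : ℚ) * (catalan (n - 1 - k) : ℚ))]
    simp only [Finset.mem_range, Nat.lt_succ_iff, le_refl, if_pos]
    have hlast : ∑ k ∈ Finset.range (n + 1),
        (2 * ((n : ℚ) - k) - 1) * (catalan k : ℚ) * (catalan (n - 1 - k) : ℚ)
          = (2 * ((n : ℚ) - n) - 1) * (catalan n : ℚ) * (catalan (n - 1 - n) : ℚ)
            + ∑ k ∈ Finset.range n,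
              (2 * ((n : ℚ) - k) - 1) * (catalan k : ℚ) * (catalan (n - 1 - k) : ℚ) := by
      rw [Finset.sum_range_succ]; ring
    rw [hlast, core, a_eq_catalan]
    have hnn : n - 1 - n = 0 := by omega
    rw [hnn]
    simp only [catalan_zero, Nat.cast_one]
    ring
  · rw [hb]; push_cast; ring
end

section
/- For all integers j ≥ 0, the identity b_{j+1} + c_{j+1} = 4*b_j + 4*c_j + a_j holds. -/
def c (j : ℕ) : ℚ :=
  2 * ∑ p ∈ Finset.HasAntidiagonal.antidiagonal j, b p.1 * b p.2

def f (k : ℕ) : ℚ := (Nat.centralBinom k : ℚ)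

lemma f_eq (k : ℕ) : f k = (Nat.factorial (2*k) : ℚ) / (Nat.factorial k * Nat.factorial k) := by
  rw [f, Nat.centralBinom, Nat.cast_choose ℚ (by omega)]
  have h : 2*k - k = k := by omega
  rw [h]

lemma fact_ne (k : ℕ) : (Nat.factorial k : ℚ) ≠ 0 :=
  Nat.cast_ne_zero.2 k.factorial_ne_zero

lemma b_eq_s4 (k : ℕ) (hk : k ≠ 0) : b k = f k / 2 := by
  obtain ⟨m, rfl⟩ := Nat.exists_eq_succ_of_ne_zero hk
  rw [b, if_neg (by omega), f_eq]
  have h1 : 2*(m+1) = (2*m+1)+1 := by ring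
  have h2 : 2*(m+1)-1 = 2*m+1 := by omega
  have h3 : m.succ - 1 = m := rfl
  rw [h1, h3]
  simp only [Nat.add_sub_cancel, Nat.factorial_succ (2*m+1), Nat.factorial_succ m]
  push_cast
  have := fact_ne m
  have := fact_ne (2*m+1)
  have h4 : ((m:ℚ)+1) ≠ 0 := by positivity
  have h5 : (2*(m:ℚ)+1+1) ≠ 0 := by positivity
  field_simp
  ring

lemma a_eq (j : ℕ) : a j = f j / (j+1) := by
  rw [a, f_eq, Nat.factorial_succ]
  push_cast
  have h1 := fact_ne j
  have h2 := fact_ne (2*j)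
  have h3 : ((j:ℚ)+1) ≠ 0 := by positivity
  rw [div_div]
  congr 1
  ring

lemma f_succ (k : ℕ) : ((k:ℚ)+1) * f (k+1) = 2*(2*(k:ℚ)+1) * f k := by
  have h := Nat.succ_mul_centralBinom_succ k
  have := congrArg (Nat.cast : ℕ → ℚ) h
  push_cast at this
  rw [f, f]
  linarith [this]

def S (n : ℕ) : ℚ := ∑ k ∈ Finset.range (n+1), f k * f (n-k)

-- reflection: ∑ k f k f(n-k) doubled equals n * S n
lemma reflect (n : ℕ) :
    2 * ∑ k ∈ Finset.range (n+1), (k:ℚ) * (f k * f (n-k)) = n * S n := by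
  have h := Finset.sum_range_reflect (fun k => (k:ℚ) * (f k * f (n-k))) (n+1)
  have h2 : ∀ k ∈ Finset.range (n+1),
      ((n+1-1-k : ℕ):ℚ) * (f (n+1-1-k) * f (n-(n+1-1-k))) = ((n-k : ℕ):ℚ) * (f (n-k) * f k) := by
    intro k hk
    rw [Finset.mem_range] at hk
    have e1 : n+1-1-k = n-k := by omega
    have e2 : n - (n-k) = k := by omega
    rw [e1, e2]
  rw [Finset.sum_congr rfl h2] at h
  have h3 : ∀ k ∈ Finset.range (n+1),
      ((k:ℚ) + ((n-k : ℕ):ℚ)) * (f k * f (n-k)) = (n:ℚ) * (f k * f (n-k)) := by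
    intro k hk
    rw [Finset.mem_range] at hk
    have : ((n-k:ℕ):ℚ) = (n:ℚ) - k := by
      rw [Nat.cast_sub (by omega)]
    rw [this]; ring
  calc 2 * ∑ k ∈ Finset.range (n+1), (k:ℚ) * (f k * f (n-k))
      = ∑ k ∈ Finset.range (n+1), (k:ℚ) * (f k * f (n-k))
        + ∑ k ∈ Finset.range (n+1), ((n-k:ℕ):ℚ) * (f (n-k) * f k) := by rw [h]; ring
    _ = ∑ k ∈ Finset.range (n+1), ((k:ℚ) + ((n-k : ℕ):ℚ)) * (f k * f (n-k)) := by
        rw [← Finset.sum_add_distrib]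
        exact Finset.sum_congr rfl (fun k hk => by ring)
    _ = ∑ k ∈ Finset.range (n+1), (n:ℚ) * (f k * f (n-k)) := Finset.sum_congr rfl h3
    _ = n * S n := by rw [S, Finset.mul_sum]

lemma S_succ (n : ℕ) : S (n+1) = 4 * S n := by
  have hn1 : ((n:ℚ)+1) ≠ 0 := by positivity
  have key : ((n:ℚ)+1) * S (n+1) = 4 * ((n:ℚ)+1) * S n := by
    have step1 : ((n:ℚ)+1) * S (n+1)
        = 2 * ∑ k ∈ Finset.range (n+2), (k:ℚ) * (f k * f (n+1-k)) := by
      have := reflect (n+1)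
      push_cast at this
      rw [this]
    have step2 : ∑ k ∈ Finset.range (n+2), (k:ℚ) * (f k * f (n+1-k))
        = ∑ k ∈ Finset.range (n+1), (((k:ℚ)+1) * f (k+1)) * f (n-k) := by
      rw [Finset.sum_range_succ' (fun k => (k:ℚ) * (f k * f (n+1-k))) (n+1)]
      simp only [Nat.cast_zero, zero_mul, add_zero]
      refine Finset.sum_congr rfl (fun k hk => ?_)
      have e : n+1-(k+1) = n-k := by omega
      rw [e]
      push_cast
      ring
    have step3 : ∑ k ∈ Finset.range (n+1), (((k:ℚ)+1) * f (k+1)) * f (n-k)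
        = ∑ k ∈ Finset.range (n+1), (2*(2*(k:ℚ)+1) * f k) * f (n-k) :=
      Finset.sum_congr rfl (fun k hk => by rw [f_succ])
    rw [step1, step2, step3]
    have expand : ∑ k ∈ Finset.range (n+1), (2*(2*(k:ℚ)+1) * f k) * f (n-k)
        = 4 * ∑ k ∈ Finset.range (n+1), (k:ℚ) * (f k * f (n-k)) + 2 * S n := by
      rw [S, Finset.mul_sum, Finset.mul_sum, ← Finset.sum_add_distrib]
      exact Finset.sum_congr rfl (fun k hk => by ring)
    rw [expand]
    have := reflect n
    linarith [this]
  have := mul_left_cancel₀ hn1 (by linarith [key] : ((n:ℚ)+1) * S (n+1) = ((n:ℚ)+1) * (4 * S n))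
  linarith [this]

lemma S_eq (n : ℕ) : S n = 4 ^ n := by
  induction n with
  | zero => simp [S, f, Nat.centralBinom]
  | succ n ih => rw [S_succ, ih]; ring

lemma f_zero : f 0 = 1 := by norm_num [f, Nat.centralBinom]

lemma c_eq (n : ℕ) (hn : n ≠ 0) : c n = 4^n / 2 - f n := by
  obtain ⟨m, rfl⟩ := Nat.exists_eq_succ_of_ne_zero hn
  show c (m+1) = 4^(m+1) / 2 - f (m+1)
  have hS : S (m+1) = 2 * f (m+1) + ∑ k ∈ Finset.range m, f (k+1) * f (m-k) := by
    rw [S, Finset.sum_range_succ' (fun k => f k * f (m+1-k)) (m+1),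
      Finset.sum_range_succ]
    have e1 : m+1-(m+1) = 0 := by omega
    have h2 : ∀ k ∈ Finset.range m, f (k+1) * f (m+1-(k+1)) = f (k+1) * f (m-k) := by
      intro k hk
      have e : m+1-(k+1) = m-k := by omega
      rw [e]
    rw [Finset.sum_congr rfl h2, e1, f_zero]
    push_cast
    ring
  have hb : (∑ p ∈ Finset.HasAntidiagonal.antidiagonal (m+1), b p.1 * b p.2)
      = ∑ k ∈ Finset.range m, (f (k+1)/2) * (f (m-k)/2) := by
    rw [Finset.Nat.sum_antidiagonal_eq_sum_range_succ (fun x y => b x * b y) (m+1),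
      Finset.sum_range_succ' (fun k => b k * b (m+1-k)) (m+1),
      Finset.sum_range_succ]
    have e1 : m+1-(m+1) = 0 := by omega
    rw [e1]
    have hb0 : b 0 = 0 := by simp [b]
    rw [hb0]
    have h2 : ∀ k ∈ Finset.range m, b (k+1) * b (m+1-(k+1)) = (f (k+1)/2) * (f (m-k)/2) := by
      intro k hk
      rw [Finset.mem_range] at hk
      have e : m+1-(k+1) = m-k := by omega
      rw [e, b_eq_s4 (k+1) (by omega), b_eq_s4 (m-k) (by omega)]
    rw [Finset.sum_congr rfl h2]
    ring
  have hS4 := S_eq (m+1)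
  rw [c, hb]
  have : (∑ k ∈ Finset.range m, (f (k+1)/2) * (f (m-k)/2))
      = (∑ k ∈ Finset.range m, f (k+1) * f (m-k)) / 4 := by
    rw [Finset.sum_div]
    exact Finset.sum_congr rfl (fun k hk => by ring)
  rw [this]
  have := hS
  rw [hS4] at this
  linarith [this]


theorem bc_recursion (j : ℕ) :
    b (j + 1) + c (j + 1) = 4 * b j + 4 * c j + a j := by
  rcases Nat.eq_zero_or_pos j with hj | hj
  · subst hj
    have hb1 : b 1 = 1 := by norm_num [b, Nat.factorial]
    have hb0 : b 0 = 0 := by simp [b]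
    have hc1 : c 1 = 0 := by
      rw [c_eq 1 one_ne_zero]
      norm_num [f, Nat.centralBinom]
    have hc0 : c 0 = 0 := by simp [c, hb0]
    have ha0 : a 0 = 1 := by norm_num [a, Nat.factorial]
    rw [hb1, hb0, hc1, hc0, ha0]
    norm_num
  · have hj' : j ≠ 0 := Nat.pos_iff_ne_zero.mp hj
    rw [b_eq_s4 (j+1) (by omega), c_eq (j+1) (by omega), b_eq_s4 j hj', c_eq j hj', a_eq]
    have hjq : ((j:ℚ)+1) ≠ 0 := by positivity
    have h := f_succ j
    have hf : f (j+1) = 2*(2*(j:ℚ)+1) * f j / ((j:ℚ)+1) := by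
      rw [eq_div_iff hjq]; linarith [h]
    rw [hf]
    field_simp
    ring
end
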